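/- arXiv:1312.5658 — 3 statements merged into one kernel-verified Lean document; each statement's English description precedes it below -/
import Mathlib

section
/- Let γ > 0 and define g(u) = 1 + 2u/(1 + √(1+4u)) for u > 0. Then the map φ(z) := z · (1 − γ²/‖z‖₂²)₊ restricted to {z : ‖z‖₂ > γ} is a bijection onto ℝ^T \ {0} with inverse given by z ↦ g(γ²/‖z‖₂²) · z. -/
open Real

/-- For `γ > 0`, the empirical Wiener map `φ(z) = (1 − γ²/‖z‖₂²)₊ z` restricted to
`{z : ‖z‖₂ > γ}` is a bijection onto `ℝ^T \ {0}`, with inverse `z ↦ g(γ²/‖z‖₂²) z` where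
`g(u) = 1 + 2u/(1 + √(1+4u))`. -/
theorem stmt_6 (T : ℕ) (γ : ℝ) (hγ : 0 < γ)
    (φ : EuclideanSpace ℝ (Fin T) → EuclideanSpace ℝ (Fin T))
    (hφ : ∀ z, φ z = max (1 - γ ^ 2 / ‖z‖ ^ 2) 0 • z)
    (g : ℝ → ℝ) (hg : ∀ u, g u = 1 + 2 * u / (1 + Real.sqrt (1 + 4 * u))) :
    Set.BijOn φ {z | γ < ‖z‖} {z | z ≠ 0} ∧
      (∀ z : EuclideanSpace ℝ (Fin T), z ≠ 0 → φ (g (γ ^ 2 / ‖z‖ ^ 2) • z) = z) ∧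
      (∀ v : EuclideanSpace ℝ (Fin T), γ < ‖v‖ → g (γ ^ 2 / ‖φ v‖ ^ 2) • φ v = v) := by
  -- key: g inverts x ↦ x(x-1) on (1, ∞)
  have key : ∀ x : ℝ, 1 < x → g (x * (x - 1)) = x := by
    intro x hx
    have hs : Real.sqrt (1 + 4 * (x * (x - 1))) = 2 * x - 1 := by
      rw [show 1 + 4 * (x * (x - 1)) = (2 * x - 1) ^ 2 by ring]
      exact Real.sqrt_sq (by linarith)
    have hx0 : x ≠ 0 := by linarith
    rw [hg, hs, show (1 : ℝ) + (2 * x - 1) = 2 * x by ring]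
    field_simp
    ring
  -- left inverse on {‖v‖ > γ}
  have L : ∀ v : EuclideanSpace ℝ (Fin T), γ < ‖v‖ →
      g (γ ^ 2 / ‖φ v‖ ^ 2) • φ v = v := by
    intro v hv
    have hv0 : (0 : ℝ) < ‖v‖ := hγ.trans hv
    set t : ℝ := 1 - γ ^ 2 / ‖v‖ ^ 2 with ht
    have hsqlt : γ ^ 2 < ‖v‖ ^ 2 := by nlinarith
    have htpos : 0 < t := by
      have h1 : γ ^ 2 / ‖v‖ ^ 2 < 1 := (div_lt_one (by positivity)).2 hsqlt
      simp only [ht]; linarith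
    have ht1 : t < 1 := by
      have h1 : 0 < γ ^ 2 / ‖v‖ ^ 2 := by positivity
      simp only [ht]; linarith
    have hφv : φ v = t • v := by
      rw [hφ]; congr 1; exact max_eq_left htpos.le
    have hnorm : ‖φ v‖ = t * ‖v‖ := by
      rw [hφv, norm_smul, Real.norm_eq_abs, abs_of_pos htpos]
    have ht0 : t ≠ 0 := ne_of_gt htpos
    have hv0' : ‖v‖ ≠ 0 := ne_of_gt hv0
    have hu : γ ^ 2 / ‖φ v‖ ^ 2 = (1 / t) * (1 / t - 1) := by
      rw [hnorm]
      have hγ2 : γ ^ 2 = (1 - t) * ‖v‖ ^ 2 := by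
        simp only [ht]; field_simp; ring
      rw [hγ2]
      field_simp
    rw [hu, key (1 / t) (by rw [lt_div_iff₀ htpos]; linarith), hφv, smul_smul,
      one_div_mul_cancel ht0, one_smul]
  -- right inverse on nonzero vectors
  have R : ∀ z : EuclideanSpace ℝ (Fin T), z ≠ 0 →
      γ < ‖g (γ ^ 2 / ‖z‖ ^ 2) • z‖ ∧ φ (g (γ ^ 2 / ‖z‖ ^ 2) • z) = z := by
    intro z hz
    have hz0 : (0 : ℝ) < ‖z‖ := norm_pos_iff.2 hz
    set u : ℝ := γ ^ 2 / ‖z‖ ^ 2 with hu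
    have hupos : 0 < u := by positivity
    set c : ℝ := g u with hc
    have hs0 : 0 ≤ Real.sqrt (1 + 4 * u) := Real.sqrt_nonneg _
    have hc1 : 1 < c := by
      rw [hc, hg]
      have h1 : 0 < 2 * u / (1 + Real.sqrt (1 + 4 * u)) := by positivity
      linarith
    have hsq : Real.sqrt (1 + 4 * u) ^ 2 = 1 + 4 * u := Real.sq_sqrt (by linarith)
    have hcu : c * (c - 1) = u := by
      rw [hc, hg]
      have hs1 : (0 : ℝ) < 1 + Real.sqrt (1 + 4 * u) := by linarith
      field_simp
      have hsq' : Real.sqrt (1 + u * 4) ^ 2 = 1 + u * 4 := by rw [mul_comm u 4]; exact hsq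
      have h2 : u * Real.sqrt (1 + u * 4) ^ 2 = u * (1 + u * 4) := by rw [hsq']
      nlinarith [hsq', h2]
    have hcpos : 0 < c := by linarith
    have hnorm : ‖c • z‖ = c * ‖z‖ := by
      rw [norm_smul, Real.norm_eq_abs, abs_of_pos hcpos]
    have hγ2 : γ ^ 2 = u * ‖z‖ ^ 2 := by
      rw [hu]; field_simp
    have hγlt : γ < ‖c • z‖ := by
      rw [hnorm]
      nlinarith [mul_pos hcpos hz0, hγ, hcu, hγ2, sq_nonneg (γ + c * ‖z‖),
        mul_pos hcpos (mul_pos hz0 hz0)]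
    refine ⟨hγlt, ?_⟩
    have hcoef : 1 - γ ^ 2 / ‖c • z‖ ^ 2 = 1 / c := by
      rw [hnorm, hγ2]
      have hc0 : c ≠ 0 := ne_of_gt hcpos
      have hz0' : ‖z‖ ≠ 0 := ne_of_gt hz0
      field_simp
      nlinarith [hcu, mul_pos hz0 hz0]
    rw [hφ, hcoef, max_eq_left (by positivity : (0:ℝ) ≤ 1 / c), smul_smul,
      one_div_mul_cancel (ne_of_gt hcpos), one_smul]
  refine ⟨⟨?_, ?_, ?_⟩, fun z hz => (R z hz).2, L⟩
  · intro z hz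
    simp only [Set.mem_setOf_eq] at hz ⊢
    have hz0 : z ≠ 0 := by
      intro h; rw [h, norm_zero] at hz; linarith
    have hzn : (0 : ℝ) < ‖z‖ := hγ.trans hz
    have htpos : 0 < 1 - γ ^ 2 / ‖z‖ ^ 2 := by
      have hsqlt : γ ^ 2 < ‖z‖ ^ 2 := by nlinarith
      have h1 : γ ^ 2 / ‖z‖ ^ 2 < 1 := (div_lt_one (by positivity)).2 hsqlt
      linarith
    rw [hφ, max_eq_left htpos.le]
    exact smul_ne_zero (ne_of_gt htpos) hz0
  · intro a ha b hb hab
    simp only [Set.mem_setOf_eq] at ha hb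
    calc a = g (γ ^ 2 / ‖φ a‖ ^ 2) • φ a := (L a ha).symm
      _ = g (γ ^ 2 / ‖φ b‖ ^ 2) • φ b := by rw [hab]
      _ = b := L b hb
  · intro v hv
    simp only [Set.mem_setOf_eq] at hv
    exact ⟨g (γ ^ 2 / ‖v‖ ^ 2) • v, (R v hv).1, (R v hv).2⟩
end

section
/- Let γ > 0 and ℓ ≥ 1. Define h : ℝ^ℓ → ℝ by h(x) = γ² [ asinh(‖x‖/(2γ)) − (1/2) exp(−2 asinh(‖x‖/(2γ))) ]. Then for every u ∈ ℝ^ℓ, the unique minimizer of x ↦ h(x) + (1/2)‖x − u‖² is Ψ₃(u) defined componentwise by Ψ₃(u)_j = u_j (1 − γ²/‖u‖²)₊, i.e. Ψ₃(u) = 0 if ‖u‖ ≤ γ and Ψ₃(u) = (1 − γ²/‖u‖²) u otherwise. -/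
open Real

noncomputable def qf (γ r : ℝ) : ℝ :=
  γ ^ 2 * (Real.arsinh (r / (2 * γ)) - (1 / 2) * Real.exp (-2 * Real.arsinh (r / (2 * γ))))

noncomputable def σf (γ r : ℝ) : ℝ := Real.sqrt (4 * γ ^ 2 + r ^ 2)

lemma σf_sq {γ : ℝ} (hγ : 0 < γ) (r : ℝ) : σf γ r ^ 2 = 4 * γ ^ 2 + r ^ 2 :=
  Real.sq_sqrt (by positivity)

lemma abs_lt_σf {γ : ℝ} (hγ : 0 < γ) (r : ℝ) : |r| < σf γ r := by
  have h1 : |r| = Real.sqrt (r ^ 2) := (Real.sqrt_sq_eq_abs r).symm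
  rw [h1]
  exact Real.sqrt_lt_sqrt (by positivity) (by nlinarith)

lemma σf_pos {γ : ℝ} (hγ : 0 < γ) (r : ℝ) : 0 < σf γ r :=
  lt_of_le_of_lt (abs_nonneg r) (abs_lt_σf hγ r)

lemma σf_add_pos {γ : ℝ} (hγ : 0 < γ) (r : ℝ) : 0 < σf γ r + r := by
  have := (abs_lt.mp (abs_lt_σf hγ r)).1; linarith

lemma σf_sub_pos {γ : ℝ} (hγ : 0 < γ) (r : ℝ) : 0 < σf γ r - r := by
  have := (abs_lt.mp (abs_lt_σf hγ r)).2; linarith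

lemma sqrt_one_add {γ : ℝ} (hγ : 0 < γ) (r : ℝ) :
    Real.sqrt (1 + (r / (2 * γ)) ^ 2) = σf γ r / (2 * γ) := by
  have h1 : 1 + (r / (2 * γ)) ^ 2 = (4 * γ ^ 2 + r ^ 2) / (2 * γ) ^ 2 := by
    field_simp; ring
  rw [h1, Real.sqrt_div' _ (by positivity), Real.sqrt_sq (by positivity)]
  rfl

lemma exp_arsinh_div {γ : ℝ} (hγ : 0 < γ) (r : ℝ) :
    Real.exp (Real.arsinh (r / (2 * γ))) = (r + σf γ r) / (2 * γ) := by
  rw [Real.exp_arsinh, sqrt_one_add hγ]; field_simp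

lemma hasDerivAt_σf {γ : ℝ} (hγ : 0 < γ) (r : ℝ) :
    HasDerivAt (σf γ) (r / σf γ r) r := by
  have h1 : HasDerivAt (fun x : ℝ => 4 * γ ^ 2 + x ^ 2) (2 * r) r := by
    simpa using (hasDerivAt_pow 2 r).const_add (4 * γ ^ 2)
  have h2 : (4 * γ ^ 2 + r ^ 2) ≠ 0 := by positivity
  have := h1.sqrt h2
  refine this.congr_deriv ?_
  rw [show Real.sqrt (4*γ^2+r^2) = σf γ r from rfl]
  field_simp [ne_of_gt (σf_pos hγ r)]

lemma hasDerivAt_arsinh_div {γ : ℝ} (hγ : 0 < γ) (r : ℝ) :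
    HasDerivAt (fun x : ℝ => Real.arsinh (x / (2 * γ))) (1 / σf γ r) r := by
  have h1 : HasDerivAt (fun x : ℝ => x / (2 * γ)) (1 / (2 * γ)) r := by
    simpa using (hasDerivAt_id r).div_const (2 * γ)
  have h2 := (Real.hasDerivAt_arsinh (r / (2 * γ))).comp r h1
  refine h2.congr_deriv ?_
  rw [sqrt_one_add hγ]
  field_simp [ne_of_gt (σf_pos hγ r)]

lemma hasDerivAt_qf {γ : ℝ} (hγ : 0 < γ) (r : ℝ) :
    HasDerivAt (fun x => qf γ x) ((σf γ r - r) / 2) r := by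
  have hs := hasDerivAt_arsinh_div hγ r
  have he : HasDerivAt (fun x : ℝ => Real.exp (-2 * Real.arsinh (x / (2 * γ))))
      (Real.exp (-2 * Real.arsinh (r / (2 * γ))) * (-2 * (1 / σf γ r))) r :=
    (hs.const_mul (-2)).exp
  have h3 : HasDerivAt (fun x => qf γ x)
      (γ ^ 2 * (1 / σf γ r - (1 / 2) * (Real.exp (-2 * Real.arsinh (r / (2 * γ))) * (-2 * (1 / σf γ r))))) r := by
    unfold qf
    exact ((hs.sub (he.const_mul (1/2))).const_mul (γ ^ 2))
  convert h3 using 1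
  have hσp := σf_pos hγ r
  have hap := σf_add_pos hγ r
  have hsq := σf_sq hγ r
  have hne : r + σf γ r ≠ 0 := by linarith
  have hexp : Real.exp (-2 * Real.arsinh (r / (2 * γ))) = (σf γ r - r) / (σf γ r + r) := by
    rw [show (-2 : ℝ) * Real.arsinh (r / (2 * γ))
        = -(Real.arsinh (r / (2 * γ)) + Real.arsinh (r / (2 * γ))) by ring,
      Real.exp_neg, Real.exp_add, exp_arsinh_div hγ]
    have l1 : (r + σf γ r) / (2 * γ) * ((r + σf γ r) / (2 * γ))
        = (r + σf γ r) ^ 2 / (4 * γ ^ 2) := by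
      field_simp; ring
    rw [l1, inv_div, div_eq_div_iff (by positivity) (by linarith)]
    linear_combination (-(σf γ r + r)) * hsq
  rw [hexp]
  have hσne : σf γ r ≠ 0 := ne_of_gt hσp
  have key : γ ^ 2 * (1 / σf γ r
      - 1 / 2 * ((σf γ r - r) / (σf γ r + r) * (-2 * (1 / σf γ r))))
      = γ ^ 2 * (2 / (σf γ r + r)) := by
    field_simp
    ring
  rw [key]
  field_simp
  linear_combination hsq

noncomputable def φf (γ a r : ℝ) : ℝ := qf γ r + (1 / 2) * (r - a) ^ 2

lemma hasDerivAt_φf {γ : ℝ} (hγ : 0 < γ) (a r : ℝ) :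
    HasDerivAt (fun x => φf γ a x) ((σf γ r + r) / 2 - a) r := by
  have h1 : HasDerivAt (fun x : ℝ => (1 / 2) * (x - a) ^ 2) (r - a) r := by
    have h2 : HasDerivAt (fun x : ℝ => x - a) 1 r := (hasDerivAt_id r).sub_const a
    have := (h2.pow 2).const_mul (1/2 : ℝ)
    refine this.congr_deriv ?_; ring
  have := (hasDerivAt_qf hγ r).add h1
  refine this.congr_deriv ?_; ring

lemma ψf_strictMono {γ : ℝ} (hγ : 0 < γ) :
    StrictMono (fun r => (σf γ r + r) / 2) := by
  apply strictMono_of_deriv_pos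
  intro r
  have h1 : HasDerivAt (fun r => (σf γ r + r) / 2) ((r / σf γ r + 1) / 2) r := by
    simpa using ((hasDerivAt_σf hγ r).add (hasDerivAt_id r)).div_const 2
  rw [h1.deriv]
  have h2 : -1 < r / σf γ r := by
    rw [lt_div_iff₀ (σf_pos hγ r)]
    have := (abs_lt.mp (abs_lt_σf hγ r)).1
    linarith
  linarith

lemma key1d {γ : ℝ} (hγ : 0 < γ) (a rs : ℝ)
    (h1 : a ≤ (σf γ rs + rs) / 2) (h2 : 0 < rs → (σf γ rs + rs) / 2 ≤ a) :
    ∀ r, 0 ≤ r → r ≠ rs → φf γ a rs < φf γ a r := by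
  have hcont : ∀ s : Set ℝ, ContinuousOn (fun x => φf γ a x) s := fun s =>
    (fun x _ => ((hasDerivAt_φf hγ a x).continuousAt.continuousWithinAt))
  have hmono : StrictMonoOn (fun x => φf γ a x) (Set.Ici rs) := by
    apply strictMonoOn_of_deriv_pos (convex_Ici rs) (hcont _)
    intro x hx
    rw [interior_Ici, Set.mem_Ioi] at hx
    rw [(hasDerivAt_φf hγ a x).deriv]
    have := ψf_strictMono hγ hx
    simp only at this
    linarith
  intro r hr hne
  rcases lt_or_gt_of_ne hne with hlt | hgt
  · -- r < rs, so rs > 0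
    have hrs : 0 < rs := lt_of_le_of_lt hr hlt
    have hanti : StrictAntiOn (fun x => φf γ a x) (Set.Iic rs) := by
      apply strictAntiOn_of_deriv_neg (convex_Iic rs) (hcont _)
      intro x hx
      rw [interior_Iic, Set.mem_Iio] at hx
      rw [(hasDerivAt_φf hγ a x).deriv]
      have := ψf_strictMono hγ hx
      simp only at this
      have := h2 hrs
      linarith
    exact hanti (le_of_lt hlt) (le_refl rs) hlt
  · exact hmono (le_refl rs) (le_of_lt hgt) hgt

/-- For `γ > 0` and `ℓ ≥ 1`, with `h(x) = γ²[asinh(‖x‖/(2γ)) − ½ exp(−2 asinh(‖x‖/(2γ)))]`,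
the unique minimizer of `x ↦ h(x) + ½‖x − u‖²` is `Ψ₃(u) = (1 − γ²/‖u‖²)₊ u`. -/
theorem stmt_7 (l : ℕ) (hl : 1 ≤ l) (γ : ℝ) (hγ : 0 < γ)
    (h : EuclideanSpace ℝ (Fin l) → ℝ)
    (hh : ∀ x, h x = γ ^ 2 * (Real.arsinh (‖x‖ / (2 * γ))
      - (1 / 2) * Real.exp (-2 * Real.arsinh (‖x‖ / (2 * γ)))))
    (Ψ : EuclideanSpace ℝ (Fin l) → EuclideanSpace ℝ (Fin l))
    (hΨ : ∀ u, Ψ u = max (1 - γ ^ 2 / ‖u‖ ^ 2) 0 • u) :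
    ∀ u x : EuclideanSpace ℝ (Fin l), x ≠ Ψ u →
      h (Ψ u) + (1 / 2) * ‖Ψ u - u‖ ^ 2 < h x + (1 / 2) * ‖x - u‖ ^ 2 := by
  intro u x hx
  have hhx : ∀ y : EuclideanSpace ℝ (Fin l), h y = qf γ ‖y‖ := fun y => by
    rw [hh y]; rfl
  set c := max (1 - γ ^ 2 / ‖u‖ ^ 2) 0 with hc_def
  have hΨu : Ψ u = c • u := hΨ u
  have hc0 : 0 ≤ c := le_max_right _ _
  have hnΨ : ‖Ψ u‖ = c * ‖u‖ := by
    rw [hΨu, norm_smul, Real.norm_eq_abs, abs_of_nonneg hc0]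
  set rs := c * ‖u‖ with hrs_def
  -- first-order conditions
  have hσ0 : σf γ 0 = 2 * γ := by
    unfold σf
    rw [show 4 * γ ^ 2 + (0:ℝ) ^ 2 = (2 * γ) ^ 2 by ring, Real.sqrt_sq (by positivity)]
  have hcond : ‖u‖ ≤ (σf γ rs + rs) / 2 ∧ (0 < rs → (σf γ rs + rs) / 2 ≤ ‖u‖) := by
    by_cases hcase : ‖u‖ ≤ γ
    · have hrs0 : rs = 0 := by
        rcases eq_or_lt_of_le (norm_nonneg u) with h0 | h0
        · rw [hrs_def, ← h0, mul_zero]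
        · have hc : c = 0 := by
            apply max_eq_right
            have h1 : ‖u‖ ^ 2 ≤ γ ^ 2 := by nlinarith
            have h2 : (1:ℝ) ≤ γ ^ 2 / ‖u‖ ^ 2 := by
              rw [le_div_iff₀ (by positivity)]; linarith
            linarith
          rw [hrs_def, hc, zero_mul]
      constructor
      · rw [hrs0, hσ0]; linarith
      · intro hpos; rw [hrs0] at hpos; exact absurd hpos (lt_irrefl 0)
    · push_neg at hcase
      have hu0 : 0 < ‖u‖ := lt_trans hγ hcase
      have hcc : c = 1 - γ ^ 2 / ‖u‖ ^ 2 := by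
        apply max_eq_left
        have h1 : γ ^ 2 / ‖u‖ ^ 2 < 1 := by
          rw [div_lt_one (by positivity)]; nlinarith
        linarith
      have hrsval : rs = ‖u‖ - γ ^ 2 / ‖u‖ := by
        rw [hrs_def, hcc]; field_simp
      have hσrs : σf γ rs = ‖u‖ + γ ^ 2 / ‖u‖ := by
        unfold σf
        rw [show 4 * γ ^ 2 + rs ^ 2 = (‖u‖ + γ ^ 2 / ‖u‖) ^ 2 by
          rw [hrsval]; field_simp; ring]
        exact Real.sqrt_sq (by positivity)
      constructor
      · rw [hσrs, hrsval]; ring_nf; linarith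
      · intro _; rw [hσrs, hrsval]; ring_nf; linarith
  have hkey := key1d hγ ‖u‖ rs hcond.1 hcond.2
  -- value at Ψ u
  have hΨsub : Ψ u - u = (c - 1) • u := by
    rw [hΨu, sub_smul, one_smul]
  have hΨnorm2 : ‖Ψ u - u‖ ^ 2 = (rs - ‖u‖) ^ 2 := by
    rw [hΨsub, norm_smul, Real.norm_eq_abs, mul_pow, sq_abs, hrs_def]; ring
  have hFΨ : h (Ψ u) + (1 / 2) * ‖Ψ u - u‖ ^ 2 = φf γ ‖u‖ rs := by
    rw [hhx, hnΨ, hΨnorm2]; rfl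
  -- lower bound via Cauchy-Schwarz
  have hCS : (inner ℝ x u : ℝ) ≤ ‖x‖ * ‖u‖ := real_inner_le_norm x u
  have hexpand : ‖x - u‖ ^ 2 = ‖x‖ ^ 2 - 2 * (inner ℝ x u : ℝ) + ‖u‖ ^ 2 :=
    norm_sub_sq_real x u
  have hlow : φf γ ‖u‖ ‖x‖ ≤ h x + (1 / 2) * ‖x - u‖ ^ 2 := by
    rw [hhx, hexpand]; unfold φf; nlinarith [hCS]
  by_cases hxr : ‖x‖ = rs
  · by_cases hie : (inner ℝ x u : ℝ) = ‖x‖ * ‖u‖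
    · exfalso
      have h5 : ‖u‖ • x = ‖x‖ • u := inner_eq_norm_mul_iff_real.mp hie
      by_cases hu : u = 0
      · apply hx
        have hx0 : ‖x‖ = 0 := by
          rw [hxr, hrs_def, hu]; simp
        rw [norm_eq_zero] at hx0
        rw [hx0, hΨu, hu, smul_zero]
      · have hupos : 0 < ‖u‖ := norm_pos_iff.mpr hu
        apply hx
        have h6 := congrArg (fun v : EuclideanSpace ℝ (Fin l) => (‖u‖⁻¹ : ℝ) • v) h5
        simp only [smul_smul, inv_mul_cancel₀ (ne_of_gt hupos), one_smul] at h6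
        rw [hΨu, h6, hxr, hrs_def]
        congr 1
        field_simp
    · have hlt : (inner ℝ x u : ℝ) < ‖x‖ * ‖u‖ := lt_of_le_of_ne hCS hie
      have hstrict : φf γ ‖u‖ ‖x‖ < h x + (1 / 2) * ‖x - u‖ ^ 2 := by
        rw [hhx, hexpand]; unfold φf; nlinarith [hlt]
      rw [hFΨ, ← hxr]
      exact hstrict
  · have hk := hkey ‖x‖ (norm_nonneg x) hxr
    rw [hFΨ]
    exact lt_of_lt_of_le hk hlow
end

section
/- Let G ∈ ℝ^{N×P}, Y ∈ ℝ^N, τ, v > 0, λ ≥ 0, and for x ∈ ℝ^P define π(x) ∝ exp(−(1/(2τ))‖Y − Gx‖₂² − λ‖x‖₁ − v‖x‖₂²) (restricted to each sparsity stratum). Then for every s > 0 and unit direction n(x) = x/‖x‖₂, sup_{‖x‖₂ ≥ r} π(x + s·n(x))/π(x) → 0 as r → ∞; i.e. π is super-exponential. -/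
open Real Matrix

set_option maxHeartbeats 1000000

/-- The target density
`π(x) ∝ exp(−(1/(2τ))‖Y − Gx‖₂² − λ‖x‖₁ − v‖x‖₂²)` is super-exponential: for every `s > 0`,
`sup_{‖x‖₂ ≥ r} π(x + s n(x))/π(x) → 0` as `r → ∞`, where `n(x) = x/‖x‖₂`. -/
theorem stmt_14 (N P : ℕ) (G : Matrix (Fin N) (Fin P) ℝ) (Y : Fin N → ℝ)
    (τ v lam : ℝ) (hτ : 0 < τ) (hv : 0 < v) (hlam : 0 ≤ lam)
    (π' : EuclideanSpace ℝ (Fin P) → ℝ)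
    (hπ : ∀ x, π' x = Real.exp (-(1 / (2 * τ)) * ∑ i, (Y i - G.mulVec x i) ^ 2
      - lam * ∑ j, |x j| - v * ‖x‖ ^ 2)) :
    ∀ s : ℝ, 0 < s → ∀ ε : ℝ, 0 < ε → ∃ r : ℝ, 0 < r ∧
      ∀ x : EuclideanSpace ℝ (Fin P), r ≤ ‖x‖ →
        π' (x + (s / ‖x‖) • x) / π' x < ε := by
  intro s hs ε hε
  set C₀ : ℝ := ∑ i, ∑ j, |Y i * G i j| with hC₀
  have hC₀0 : 0 ≤ C₀ :=
    Finset.sum_nonneg fun i _ => Finset.sum_nonneg fun j _ => abs_nonneg _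
  refine ⟨max 1 ((s * C₀ / τ - Real.log ε) / (2 * v * s) + 1),
    lt_of_lt_of_le one_pos (le_max_left _ _), ?_⟩
  intro x hx
  have hx1 : (1 : ℝ) ≤ ‖x‖ := le_trans (le_max_left _ _) hx
  have hx0 : (0 : ℝ) < ‖x‖ := lt_of_lt_of_le one_pos hx1
  set c : ℝ := s / ‖x‖ with hc
  have hc0 : 0 < c := div_pos hs hx0
  have hcs : c * ‖x‖ = s := div_mul_cancel₀ s (ne_of_gt hx0)
  set y : EuclideanSpace ℝ (Fin P) := x + c • x with hy
  -- coordinates of y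
  have hyj : ∀ j, y j = (1 + c) * x j := by
    intro j
    simp only [hy, PiLp.add_apply, PiLp.smul_apply, smul_eq_mul]
    ring
  -- norm of y
  have hyx : y = (1 + c) • x := by rw [hy, add_smul, one_smul]
  have hny : ‖y‖ = (1 + c) * ‖x‖ := by
    rw [hyx, norm_smul, Real.norm_eq_abs, abs_of_pos (by linarith)]
  -- coordinate bound
  have hcoord : ∀ j, |x j| ≤ ‖x‖ := by
    intro j
    have h1 : ‖x‖ = Real.sqrt (∑ i, (x i) ^ 2) := by
      rw [EuclideanSpace.norm_eq]
      congr 1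
      exact Finset.sum_congr rfl fun i _ => by rw [Real.norm_eq_abs, sq_abs]
    have h2 : (x j) ^ 2 ≤ ∑ i, (x i) ^ 2 :=
      Finset.single_le_sum (f := fun i => (x i) ^ 2) (fun i _ => sq_nonneg _) (Finset.mem_univ j)
    calc |x j| = Real.sqrt ((x j) ^ 2) := (Real.sqrt_sq_eq_abs _).symm
      _ ≤ Real.sqrt (∑ i, (x i) ^ 2) := Real.sqrt_le_sqrt h2
      _ = ‖x‖ := h1.symm
  have hmv : ∀ i, G.mulVec y i = (1 + c) * G.mulVec x i := by
    intro i
    simp only [Matrix.mulVec, dotProduct, Finset.mul_sum]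
    exact Finset.sum_congr rfl fun j _ => by rw [hyj j]; ring
  -- quadratic sum expansion
  have hQ : ∑ i, (Y i - G.mulVec y i) ^ 2
      = ∑ i, (Y i - G.mulVec x i) ^ 2 - 2 * c * (∑ i, G.mulVec x i * Y i)
        + (2 * c + c ^ 2) * ∑ i, (G.mulVec x i) ^ 2 := by
    have h1 : ∑ i, (Y i - G.mulVec y i) ^ 2
        = ∑ i, ((Y i - G.mulVec x i) ^ 2 - 2 * c * (G.mulVec x i * Y i)
            + (2 * c + c ^ 2) * (G.mulVec x i) ^ 2) :=
      Finset.sum_congr rfl fun i _ => by rw [hmv i]; ring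
    rw [h1, Finset.sum_add_distrib, Finset.sum_sub_distrib, ← Finset.mul_sum, ← Finset.mul_sum]
  -- bound on ∑ (Gx)ᵢ Yᵢ
  have hbY : ∑ i, G.mulVec x i * Y i ≤ C₀ * ‖x‖ := by
    rw [hC₀, Finset.sum_mul]
    refine Finset.sum_le_sum fun i _ => ?_
    have h1 : G.mulVec x i * Y i = ∑ j, G i j * x j * Y i := by
      simp only [Matrix.mulVec, dotProduct, Finset.sum_mul]
    rw [h1, Finset.sum_mul]
    refine Finset.sum_le_sum fun j _ => ?_
    calc G i j * x j * Y i ≤ |G i j * x j * Y i| := le_abs_self _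
      _ = |Y i * G i j| * |x j| := by rw [← abs_mul]; exact congrArg abs (by ring)
      _ ≤ |Y i * G i j| * ‖x‖ := mul_le_mul_of_nonneg_left (hcoord j) (abs_nonneg _)
  -- ℓ¹ comparison
  have hL : ∑ j, |x j| ≤ ∑ j, |y j| := by
    refine Finset.sum_le_sum fun j _ => ?_
    rw [hyj j, abs_mul, abs_of_pos (show (0:ℝ) < 1 + c by linarith)]
    nlinarith [abs_nonneg (x j)]
  -- lower bound on 2vs‖x‖
  have hnorm : s * C₀ / τ - Real.log ε < 2 * v * s * ‖x‖ := by
    have h1 : (s * C₀ / τ - Real.log ε) / (2 * v * s) + 1 ≤ ‖x‖ :=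
      le_trans (le_max_right _ _) hx
    have h2 : 0 < 2 * v * s := by positivity
    have h3 : (s * C₀ / τ - Real.log ε) / (2 * v * s) * (2 * v * s) = s * C₀ / τ - Real.log ε :=
      div_mul_cancel₀ _ (ne_of_gt h2)
    nlinarith
  -- core inequalities
  have hcS : c * (∑ i, G.mulVec x i * Y i) ≤ s * C₀ := by
    calc c * (∑ i, G.mulVec x i * Y i) ≤ c * (C₀ * ‖x‖) :=
          mul_le_mul_of_nonneg_left hbY hc0.le
      _ = s * C₀ := by rw [← hcs]; ring
  have hB : (0:ℝ) ≤ ∑ i, (G.mulVec x i) ^ 2 :=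
    Finset.sum_nonneg fun i _ => sq_nonneg _
  set Qx := ∑ i, (Y i - G.mulVec x i) ^ 2 with hQx
  set S := ∑ i, G.mulVec x i * Y i with hS
  set B := ∑ i, (G.mulVec x i) ^ 2 with hBdef
  set Lx := ∑ j, |x j| with hLx
  set Ly := ∑ j, |y j| with hLy
  rw [hπ, hπ, ← Real.exp_sub, ← Real.exp_log hε]
  apply Real.exp_lt_exp.mpr
  rw [hQ, hny]
  have hEq : -(1 / (2 * τ)) * (Qx - 2 * c * S + (2 * c + c ^ 2) * B) - lam * Ly
        - v * ((1 + c) * ‖x‖) ^ 2 - (-(1 / (2 * τ)) * Qx - lam * Lx - v * ‖x‖ ^ 2)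
      = 1 / (2 * τ) * (2 * (c * S)) - 1 / (2 * τ) * ((2 * c + c ^ 2) * B)
        - lam * (Ly - Lx) - (v * (2 * c) * ‖x‖ ^ 2 + v * c ^ 2 * ‖x‖ ^ 2) := by ring
  rw [hEq]
  have hS2 : 1 / (2 * τ) * (2 * (c * S)) ≤ s * C₀ / τ := by
    calc 1 / (2 * τ) * (2 * (c * S)) ≤ 1 / (2 * τ) * (2 * (s * C₀)) := by
          apply mul_le_mul_of_nonneg_left (by linarith) (by positivity)
      _ = s * C₀ / τ := by field_simp
  have hBp : 0 ≤ 1 / (2 * τ) * ((2 * c + c ^ 2) * B) := by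
    apply mul_nonneg (by positivity)
    exact mul_nonneg (by nlinarith) hB
  have hCpos : 0 ≤ lam * (Ly - Lx) := mul_nonneg hlam (by linarith)
  have hD : v * (2 * c) * ‖x‖ ^ 2 = 2 * v * s * ‖x‖ := by rw [← hcs]; ring
  have hD2 : 0 ≤ v * c ^ 2 * ‖x‖ ^ 2 := by positivity
  linarith [hS2, hBp, hCpos, hD, hD2, hnorm]
end
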